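/- Let T be a finite rooted in-tree with output file sizes f : V → ℝ≥0 and execution file sizes n : V → ℝ≥0, and let v be any node of T. Then the minimum peak memory over all sequential traversals of the subtree of T rooted at v is at most the minimum peak memory over all sequential traversals of T. (Hence, in the ParSubtrees heuristic, processing any maximal subtree optimally uses no more memory than an optimal sequential processing of the whole tree.) -/

import Mathlib

/-- A finite rooted in-tree: every node has a parent (the root is its own
parent), and a rank function witnesses that following parents strictly
decreases towards the root, so every node has a unique path to the root. -/
structure InTree where
  V : Type
  [fin : Fintype V]
  [deq : DecidableEq V]
  root : V
  parent : V → V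
  parent_root : parent root = root
  rk : V → ℕ
  rk_lt : ∀ v, v ≠ root → rk (parent v) < rk v
  rk_root : ∀ v, rk v = 0 → v = root

attribute [instance] InTree.fin InTree.deq

/-- A schedule of `T` on `p` processors: at most `p` tasks per unit time step,
and every non-root task finishes before its parent starts. -/
def InTree.IsSchedule (T : InTree) (p : ℕ) (t : T.V → ℕ) : Prop :=
  (∀ s : ℕ, (Finset.univ.filter (fun i => t i = s)).card ≤ p) ∧
  (∀ i : T.V, i ≠ T.root → t i + 1 ≤ t (T.parent i))

/-- Makespan of a schedule: `max_i (t i + 1)`. -/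
def InTree.makespan (T : InTree) (t : T.V → ℕ) : ℕ :=
  Finset.univ.sup (fun i => t i + 1)

/-- Memory used at step `s`: number of nodes `i` with `t i ≤ s` that are the
root or whose parent has not finished before step `s`. -/
def InTree.memAt (T : InTree) (t : T.V → ℕ) (s : ℕ) : ℕ :=
  (Finset.univ.filter (fun i : T.V => t i ≤ s ∧ (i = T.root ∨ s ≤ t (T.parent i)))).card

/-- Peak memory of a schedule: maximum memory usage over steps `0 ≤ s < makespan`. -/
def InTree.peakMemory (T : InTree) (t : T.V → ℕ) : ℕ :=
  (Finset.range (T.makespan t)).sup (T.memAt t)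


/-- A sequential traversal of `T`: an ordering of the nodes (positions
`Fin |V|`) in which every node appears after all of its children, i.e., every
non-root node appears strictly before its parent. -/
def InTree.IsTraversal (T : InTree) (σ : Fin (Fintype.card T.V) ≃ T.V) : Prop :=
  ∀ j : T.V, j ≠ T.root → σ.symm j < σ.symm (T.parent j)

/-- Memory used while processing the node at position `k` of a traversal `σ`,
with output file sizes `f` and execution file sizes `nn`: it is
`nn(σ k) + f(σ k)` plus the sizes of the output files of all nodes processed
strictly before `σ k` whose parent is `σ k` itself or is processed strictly
after `σ k`. -/
def InTree.memOfTraversal (T : InTree) (f nn : T.V → ℝ)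
    (σ : Fin (Fintype.card T.V) ≃ T.V) (k : Fin (Fintype.card T.V)) : ℝ :=
  nn (σ k) + f (σ k) +
    ∑ j ∈ Finset.univ.filter
        (fun j : T.V => σ.symm j < k ∧ (T.parent j = σ k ∨ k < σ.symm (T.parent j))),
      f j

/-- Peak memory of a sequential traversal: the maximum, over all positions `k`,
of the memory used while processing the node at position `k`. -/
noncomputable def InTree.peakOfTraversal (T : InTree) (f nn : T.V → ℝ)
    (σ : Fin (Fintype.card T.V) ≃ T.V) : ℝ :=
  haveI : Nonempty (Fin (Fintype.card T.V)) :=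
    Fin.pos_iff_nonempty.mp (Fintype.card_pos_iff.mpr ⟨T.root⟩)
  Finset.univ.sup' Finset.univ_nonempty (T.memOfTraversal f nn σ)

/-- The subtree of `T` rooted at `v`: the node set consists of `v` and all its
descendants, with the parent relation inherited from `T`. -/
noncomputable def InTree.subtree (T : InTree) (v : T.V) : InTree where
  V := {u : T.V // ∃ k : ℕ, (T.parent)^[k] u = v}
  fin := by
    classical
    exact Subtype.fintype _
  deq := Subtype.instDecidableEq
  root := ⟨v, 0, rfl⟩
  parent := fun u =>
    if h : (u : T.V) = v then ⟨v, 0, rfl⟩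
    else
      ⟨T.parent u, by
        obtain ⟨k, hk⟩ := u.2
        match k, hk with
        | 0, hk => exact absurd hk h
        | (k+1), hk =>
          exact ⟨k, (Function.iterate_succ_apply T.parent k u.1).symm.trans hk⟩⟩
  parent_root := by simp
  rk := fun u => T.rk u
  rk_lt := by
    rintro ⟨u, k, hk⟩ h
    have huv : u ≠ v := by
      intro h'
      exact h (Subtype.ext h')
    have hur : u ≠ T.root := by
      intro h'
      subst h'
      rw [Function.iterate_fixed T.parent_root] at hk
      exact huv hk
    simp only [dif_neg huv]
    exact T.rk_lt u hur
  rk_root := by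
    rintro ⟨u, k, hk⟩ h
    have hur : u = T.root := T.rk_root u h
    subst hur
    rw [Function.iterate_fixed T.parent_root] at hk
    exact Subtype.ext hk


lemma InTree.exists_traversal (T : InTree) :
    ∃ σ : Fin (Fintype.card T.V) ≃ T.V, T.IsTraversal σ := by
  classical
  let e0 : Fin (Fintype.card T.V) ≃ T.V := (Fintype.equivFin T.V).symm
  let g : Fin (Fintype.card T.V) → ℕᵒᵈ := fun i => OrderDual.toDual (T.rk (e0 i))
  refine ⟨(Tuple.sort g).trans e0, ?_⟩
  intro j hj
  by_contra hle
  push_neg at hle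
  set σ : Fin (Fintype.card T.V) ≃ T.V := (Tuple.sort g).trans e0 with hσ
  have hmono := Tuple.monotone_sort g
  have h2 := hmono hle
  have h3 : T.rk (σ (σ.symm j)) ≤ T.rk (σ (σ.symm (T.parent j))) := h2
  rw [Equiv.apply_symm_apply, Equiv.apply_symm_apply] at h3
  exact absurd (T.rk_lt j hj) (not_lt.mpr h3)

lemma InTree.peakOfTraversal_nonneg (T : InTree) (f nn : T.V → ℝ)
    (hf : ∀ i, 0 ≤ f i) (hnn : ∀ i, 0 ≤ nn i)
    (σ : Fin (Fintype.card T.V) ≃ T.V) : 0 ≤ T.peakOfTraversal f nn σ := by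
  haveI hne : Nonempty (Fin (Fintype.card T.V)) :=
    Fin.pos_iff_nonempty.mp (Fintype.card_pos_iff.mpr ⟨T.root⟩)
  obtain ⟨k⟩ := hne
  unfold InTree.peakOfTraversal
  refine le_trans ?_ (Finset.le_sup' _ (Finset.mem_univ k))
  unfold InTree.memOfTraversal
  exact add_nonneg (add_nonneg (hnn _) (hf _)) (Finset.sum_nonneg fun j _ => hf j)

lemma InTree.restrict_traversal (T : InTree) (f nn : T.V → ℝ) (hf : ∀ i, 0 ≤ f i) (v : T.V)
    (σ : Fin (Fintype.card T.V) ≃ T.V) (hσ : T.IsTraversal σ) :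
    ∃ τ : Fin (Fintype.card (T.subtree v).V) ≃ (T.subtree v).V,
      (T.subtree v).IsTraversal τ ∧
      (T.subtree v).peakOfTraversal (fun u => f u.1) (fun u => nn u.1) τ
        ≤ T.peakOfTraversal f nn σ := by
  classical
  let s : Finset (Fin (Fintype.card T.V)) := Finset.univ.filter (fun k => ∃ kk : ℕ, (T.parent)^[kk] (σ k) = v)
  have hcard : s.card = Fintype.card (T.subtree v).V := by
    have e1 : {k : Fin (Fintype.card T.V) // ∃ kk : ℕ, (T.parent)^[kk] (σ k) = v} ≃ (T.subtree v).V :=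
      σ.subtypeEquiv (fun k => Iff.rfl)
    rw [← Fintype.card_congr e1]
    simp [s, Fintype.card_subtype]
  let e : Fin (Fintype.card (T.subtree v).V) ≃o {x // x ∈ s} := s.orderIsoOfFin hcard
  have hmem : ∀ k : Fin (Fintype.card (T.subtree v).V),
      ∃ kk : ℕ, (T.parent)^[kk] (σ (e k)) = v := fun k => by
    have h := (e k).2
    rw [Finset.mem_filter] at h
    exact h.2
  let τf : Fin (Fintype.card (T.subtree v).V) → (T.subtree v).V := fun k => ⟨σ (e k), hmem k⟩
  have hinj : Function.Injective τf := by
    intro a b hab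
    have h1 : ((e a : Fin (Fintype.card T.V))) = (e b : Fin (Fintype.card T.V)) :=
      σ.injective (congrArg Subtype.val hab)
    exact e.injective (Subtype.ext h1)
  have hbij : Function.Bijective τf :=
    (Fintype.bijective_iff_injective_and_card τf).mpr ⟨hinj, by rw [Fintype.card_fin]⟩
  let τ : Fin (Fintype.card (T.subtree v).V) ≃ (T.subtree v).V := Equiv.ofBijective τf hbij
  have hkey : ∀ j : (T.subtree v).V, ((e (τ.symm j) : Fin (Fintype.card T.V))) = σ.symm j.1 := by
    intro j
    apply σ.injective
    rw [Equiv.apply_symm_apply]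
    exact congrArg Subtype.val (τ.apply_symm_apply j)
  have hlt : ∀ a b : Fin (Fintype.card (T.subtree v).V),
      a < b ↔ ((e a : Fin (Fintype.card T.V)) < (e b : Fin (Fintype.card T.V))) :=
    fun a b => ⟨fun h => Subtype.coe_lt_coe.mpr (e.lt_iff_lt.mpr h),
      fun h => e.lt_iff_lt.mp (Subtype.coe_lt_coe.mp h)⟩
  have hpar : ∀ j : (T.subtree v).V, j.1 ≠ v → ((T.subtree v).parent j).1 = T.parent j.1 := by
    intro j hj
    simp [InTree.subtree, hj]
  have hnotroot : ∀ j : (T.subtree v).V, j.1 ≠ v → j.1 ≠ T.root := by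
    rintro ⟨u, k, hk⟩ hv hr
    dsimp only at hv hr
    subst hr
    rw [Function.iterate_fixed T.parent_root] at hk
    exact hv hk
  have htrav : (T.subtree v).IsTraversal τ := by
    intro j hj
    have hv : j.1 ≠ v := fun hv => hj (Subtype.ext hv)
    have hr := hnotroot j hv
    rw [hlt, hkey, hkey, hpar j hv]
    exact hσ j.1 hr
  refine ⟨τ, htrav, ?_⟩
  unfold InTree.peakOfTraversal
  apply Finset.sup'_le
  intro k _
  refine le_trans ?_ (Finset.le_sup' (T.memOfTraversal f nn σ) (Finset.mem_univ ((e k : Fin (Fintype.card T.V)))))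
  unfold InTree.memOfTraversal
  set A : Finset (T.subtree v).V := Finset.univ.filter
      (fun j : (T.subtree v).V => τ.symm j < k ∧
        ((T.subtree v).parent j = τ k ∨ k < τ.symm ((T.subtree v).parent j))) with hA
  set B : Finset T.V := Finset.univ.filter
      (fun j : T.V => σ.symm j < (e k : Fin (Fintype.card T.V)) ∧
        (T.parent j = σ (e k : Fin (Fintype.card T.V)) ∨
          (e k : Fin (Fintype.card T.V)) < σ.symm (T.parent j))) with hB
  have hAB : ∀ j ∈ A, j.1 ∈ B := by
    intro j hjA
    rw [hA, Finset.mem_filter] at hjA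
    obtain ⟨-, h1, h2⟩ := hjA
    have hv : j.1 ≠ v := by
      intro hv
      have hj : j = (T.subtree v).root := Subtype.ext hv
      rw [hj] at h1 h2
      rw [(T.subtree v).parent_root] at h2
      rcases h2 with h2 | h2
      · rw [h2, Equiv.symm_apply_apply] at h1
        exact lt_irrefl _ h1
      · exact lt_irrefl _ (h1.trans h2)
    rw [hB, Finset.mem_filter]
    refine ⟨Finset.mem_univ _, ?_, ?_⟩
    · have := (hlt _ _).mp h1
      rwa [hkey] at this
    · rcases h2 with h2 | h2
      · left
        rw [← hpar j hv]
        exact congrArg Subtype.val h2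
      · right
        have := (hlt _ _).mp h2
        rwa [hkey, hpar _ hv] at this
  have hsum : (∑ j ∈ A, f j.1) ≤ ∑ j ∈ B, f j := by
    have h1 : ∑ j ∈ A, f j.1 = ∑ x ∈ A.image Subtype.val, f x :=
      (Finset.sum_image (fun x _ y _ h => Subtype.ext h)).symm
    rw [h1]
    refine Finset.sum_le_sum_of_subset_of_nonneg ?_ (fun i _ _ => hf i)
    intro x hx
    obtain ⟨j, hjA, rfl⟩ := Finset.mem_image.mp hx
    exact hAB j hjA
  exact add_le_add_right hsum _

/-- The minimum peak memory over all sequential traversals of the subtree of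
`T` rooted at any node `v` is at most the minimum peak memory over all
sequential traversals of `T` itself. -/
theorem stmt12 (T : InTree) (f nn : T.V → ℝ)
    (hf : ∀ i, 0 ≤ f i) (hnn : ∀ i, 0 ≤ nn i) (v : T.V) :
    sInf {M : ℝ | ∃ σ : Fin (Fintype.card (T.subtree v).V) ≃ (T.subtree v).V,
        (T.subtree v).IsTraversal σ ∧
        (T.subtree v).peakOfTraversal (fun u => f u.1) (fun u => nn u.1) σ = M}
      ≤ sInf {M : ℝ | ∃ σ : Fin (Fintype.card T.V) ≃ T.V,
        T.IsTraversal σ ∧ T.peakOfTraversal f nn σ = M} := by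
  classical
  obtain ⟨σ0, hσ0⟩ := T.exists_traversal
  refine le_csInf ⟨_, σ0, hσ0, rfl⟩ ?_
  rintro M ⟨σ, hσ, rfl⟩
  obtain ⟨τ, hτ, hle⟩ := T.restrict_traversal f nn hf v σ hσ
  refine csInf_le_of_le ⟨0, ?_⟩ ⟨τ, hτ, rfl⟩ hle
  rintro x ⟨τ', hτ', rfl⟩
  exact (T.subtree v).peakOfTraversal_nonneg _ _ (fun u => hf u.1) (fun u => hnn u.1) τ'
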